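/- Let F : ℝ → ℝ vanish on (-∞, 0), be right-continuous and of locally bounded variation, and suppose the Laplace–Stieltjes integral g(t) = ∫₀⁻^∞ e^{-tv} dF(v) converges for every t > 0. If for some Δ > 0 one has lim_{Λ → ∞} Λ^{-Δ} Γ(Δ+1) F(Λ) = 1, then lim_{t → 0⁺} t^Δ g(t) = 1. -/

import Mathlib

open MeasureTheory Filter Topology Set

/-- Integration by parts / Fubini for the Laplace–Stieltjes transform of a monotone
right-continuous function vanishing on the negatives. -/
lemma laplace_stieltjes_eq (f : StieltjesFunction ℝ) (hneg : ∀ x < (0:ℝ), f x = 0)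
    {t : ℝ} (ht : 0 < t) (hint : Integrable (fun v => Real.exp (-t * v)) f.measure) :
    (∫ v, Real.exp (-t * v) ∂f.measure) = ∫ s, t * (Real.exp (-t * s) * f s) ∧
      Integrable (fun s => t * (Real.exp (-t * s) * f s)) := by
  have hbot : Tendsto f atBot (𝓝 0) := by
    refine Tendsto.congr' ?_ tendsto_const_nhds
    filter_upwards [eventually_lt_atBot (0:ℝ)] with x hx using (hneg x hx).symm
  have hf0 : ∀ s, 0 ≤ f s := by
    intro s
    rcases lt_or_ge s 0 with h | h
    · exact (hneg s h).ge
    · have := f.mono (show (-1:ℝ) ≤ s by linarith)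
      rwa [hneg (-1) (by norm_num)] at this
  have hIic : ∀ s : ℝ, f.measure (Iic s) = ENNReal.ofReal (f s) := by
    intro s
    rw [f.measure_Iic hbot, sub_zero]
  have hfmeas : Measurable f := f.mono.measurable
  -- inner integral identity
  have hinner : ∀ v : ℝ, ENNReal.ofReal (Real.exp (-t * v)) =
      ∫⁻ s in Ici v, ENNReal.ofReal (t * Real.exp (-t * s)) := by
    intro v
    have hIoi : IntegrableOn (fun s => t * Real.exp (-t * s)) (Ioi v) :=
      (exp_neg_integrableOn_Ioi v ht).const_mul t
    have hreal : (∫ s in Ioi v, t * Real.exp (-t * s)) = Real.exp (-t * v) := by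
      have hderiv : ∀ x ∈ Ici v, HasDerivAt (fun s => -Real.exp (-t * s))
          (t * Real.exp (-t * x)) x := by
        intro x _
        have : HasDerivAt (fun s : ℝ => -t * s) (-t) x := by
          simpa using (hasDerivAt_id x).const_mul (-t)
        have := (this.exp).neg
        exact this.congr_deriv (by ring)
      have htend : Tendsto (fun s => -Real.exp (-t * s)) atTop (𝓝 0) := by
        have h1 : Tendsto (fun s : ℝ => t * s) atTop atTop :=
          Tendsto.const_mul_atTop ht tendsto_id
        have := (Real.tendsto_exp_neg_atTop_nhds_zero.comp h1).neg
        simpa [Function.comp, neg_mul] using this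
      have := integral_Ioi_of_hasDerivAt_of_tendsto
        ((hderiv v (self_mem_Ici)).continuousAt.continuousWithinAt) (fun x hx => hderiv x (mem_Ici.2 (le_of_lt hx)))
        hIoi htend
      rw [this]; ring
    have hIci : IntegrableOn (fun s => t * Real.exp (-t * s)) (Ici v) := by
      rwa [integrableOn_Ici_iff_integrableOn_Ioi]
    rw [← MeasureTheory.integral_Ici_eq_integral_Ioi] at hreal
    rw [← hreal, MeasureTheory.ofReal_integral_eq_lintegral_ofReal hIci
      (Eventually.of_forall fun s => by positivity)]
  -- the double-integral swap
  have key : (∫⁻ v, ENNReal.ofReal (Real.exp (-t * v)) ∂f.measure) =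
      ∫⁻ s, ENNReal.ofReal (t * (Real.exp (-t * s) * f s)) := by
    have h1 : (∫⁻ v, ENNReal.ofReal (Real.exp (-t * v)) ∂f.measure) =
        ∫⁻ v, ∫⁻ s, ENNReal.ofReal (t * Real.exp (-t * s)) * (Iic s).indicator 1 v ∂volume
          ∂f.measure := by
      refine lintegral_congr fun v => ?_
      rw [hinner v, ← lintegral_indicator measurableSet_Ici]
      refine lintegral_congr fun s => ?_
      by_cases hvs : v ≤ s
      · simp [indicator, hvs]
      · simp [indicator, hvs]
    have hswap : AEMeasurable (Function.uncurry fun v s =>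
        ENNReal.ofReal (t * Real.exp (-t * s)) * (Iic s).indicator 1 v)
        (f.measure.prod volume) := by
      have : (Function.uncurry fun v s =>
          ENNReal.ofReal (t * Real.exp (-t * s)) * (Iic s).indicator 1 v) =
          fun p : ℝ × ℝ => ENNReal.ofReal (t * Real.exp (-t * p.2)) *
            ({q : ℝ × ℝ | q.1 ≤ q.2}.indicator 1 p) := by
        funext p
        by_cases h : p.1 ≤ p.2 <;> simp [Function.uncurry, indicator, h]
      rw [this]
      exact ((ENNReal.measurable_ofReal.comp ((measurable_const.mul
        ((Real.measurable_exp.comp ((measurable_const.mul measurable_id).comp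
          measurable_snd))))))).mul
        (measurable_one.indicator (measurableSet_le measurable_fst measurable_snd))
        |>.aemeasurable
    rw [h1, lintegral_lintegral_swap hswap]
    refine lintegral_congr fun s => ?_
    rw [lintegral_const_mul _ (measurable_one.indicator measurableSet_Iic),
      lintegral_indicator_one measurableSet_Iic, hIic s,
      ← ENNReal.ofReal_mul (by positivity), mul_assoc]
  -- finiteness
  have hfin : (∫⁻ s, ENNReal.ofReal (t * (Real.exp (-t * s) * f s))) < ⊤ := by
    rw [← key]; exact hint.lintegral_lt_top
  have hmeasG : AEStronglyMeasurable (fun s => t * (Real.exp (-t * s) * f s)) volume := by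
    exact ((measurable_const.mul (((Real.measurable_exp.comp
      (measurable_const.mul measurable_id))).mul hfmeas))).aestronglyMeasurable
  have hG0 : 0 ≤ᵐ[volume] fun s => t * (Real.exp (-t * s) * f s) :=
    Eventually.of_forall fun s => by
      have := hf0 s; positivity
  have hGint : Integrable (fun s => t * (Real.exp (-t * s) * f s)) := by
    refine ⟨hmeasG, ?_⟩
    rw [hasFiniteIntegral_iff_ofReal hG0]
    exact hfin
  constructor
  · rw [MeasureTheory.integral_eq_lintegral_of_nonneg_ae
      (Eventually.of_forall fun v => (Real.exp_pos _).le) hint.aestronglyMeasurable,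
      MeasureTheory.integral_eq_lintegral_of_nonneg_ae hG0 hmeasG, key]
  · exact hGint

/-- Abelian theorem for the Laplace–Stieltjes transform of a right-continuous
function of (locally) bounded variation vanishing on the negatives, encoded via
its Jordan decomposition `F = f₁ - f₂` into two Stieltjes functions (monotone,
right-continuous) both vanishing on the negatives. -/
theorem abelian_laplace_stieltjes
    (f₁ f₂ : StieltjesFunction ℝ) (F : ℝ → ℝ) (hF : ∀ x, F x = f₁ x - f₂ x)
    (hneg₁ : ∀ x < (0 : ℝ), f₁ x = 0) (hneg₂ : ∀ x < (0 : ℝ), f₂ x = 0)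
    (hint₁ : ∀ t : ℝ, 0 < t → Integrable (fun v => Real.exp (-t * v)) f₁.measure)
    (hint₂ : ∀ t : ℝ, 0 < t → Integrable (fun v => Real.exp (-t * v)) f₂.measure)
    (Δ : ℝ) (hΔ : 0 < Δ)
    (hlim : Tendsto (fun Λ : ℝ => Λ ^ (-Δ) * Real.Gamma (Δ + 1) * F Λ) atTop (𝓝 1)) :
    Tendsto (fun t : ℝ =>
        t ^ Δ * ((∫ v, Real.exp (-t * v) ∂f₁.measure) - ∫ v, Real.exp (-t * v) ∂f₂.measure))
      (𝓝[>] (0 : ℝ)) (𝓝 1) := by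
  have hΓpos : 0 < Real.Gamma (Δ + 1) := Real.Gamma_pos_of_pos (by linarith)
  set Γ : ℝ := Real.Gamma (Δ + 1) with hΓdef
  have hFmeas : Measurable F := by
    have : F = fun x => f₁ x - f₂ x := funext hF
    rw [this]; exact f₁.mono.measurable.sub f₂.mono.measurable
  have hFneg : ∀ x < (0:ℝ), F x = 0 := fun x hx => by
    rw [hF, hneg₁ x hx, hneg₂ x hx, sub_zero]
  -- bound on F at infinity
  obtain ⟨M, hM1, hMbd⟩ : ∃ M : ℝ, 1 ≤ M ∧ ∀ Λ ≥ M, |F Λ| ≤ 2 / Γ * Λ ^ Δ := by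
    have h2 : ∀ᶠ Λ in atTop, |Λ ^ (-Δ) * Γ * F Λ - 1| < 1 := by
      have := hlim
      rw [Metric.tendsto_nhds] at this
      simpa [Real.dist_eq] using this 1 one_pos
    rw [eventually_atTop] at h2
    obtain ⟨M0, hM0⟩ := h2
    refine ⟨max M0 1, le_max_right _ _, fun Λ hΛ => ?_⟩
    have hΛ1 : (1:ℝ) ≤ Λ := le_trans (le_max_right _ _) hΛ
    have hΛpos : 0 < Λ := by linarith
    have h := hM0 Λ (le_trans (le_max_left _ _) hΛ)
    have habs : |Λ ^ (-Δ) * Γ * F Λ| ≤ 2 := by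
      have h3 : |Λ ^ (-Δ) * Γ * F Λ| - |(1:ℝ)| ≤ |Λ ^ (-Δ) * Γ * F Λ - 1| :=
        abs_sub_abs_le_abs_sub _ _
      rw [abs_one] at h3; linarith
    have hpow : 0 < Λ ^ (-Δ) := Real.rpow_pos_of_pos hΛpos _
    rw [abs_mul, abs_mul, abs_of_pos hpow, abs_of_pos hΓpos] at habs
    have hpowΔ : 0 < Λ ^ Δ := Real.rpow_pos_of_pos hΛpos _
    have hinv : Λ ^ (-Δ) = (Λ ^ Δ)⁻¹ := by
      rw [Real.rpow_neg hΛpos.le]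
    rw [hinv] at habs
    rw [div_mul_eq_mul_div, le_div_iff₀ hΓpos]
    have := mul_le_mul_of_nonneg_left habs hpowΔ.le
    calc |F Λ| * Γ = Λ ^ Δ * ((Λ ^ Δ)⁻¹ * Γ * |F Λ|) := by
          field_simp
      _ ≤ Λ ^ Δ * 2 := by
          exact mul_le_mul_of_nonneg_left habs hpowΔ.le
      _ = 2 * Λ ^ Δ := by ring
  -- bound on F on compacts
  have hf₁0 : ∀ s, 0 ≤ f₁ s := fun s => by
    rcases lt_or_ge s 0 with h | h
    · exact (hneg₁ s h).ge
    · have := f₁.mono (show (-1:ℝ) ≤ s by linarith)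
      rwa [hneg₁ (-1) (by norm_num)] at this
  have hf₂0 : ∀ s, 0 ≤ f₂ s := fun s => by
    rcases lt_or_ge s 0 with h | h
    · exact (hneg₂ s h).ge
    · have := f₂.mono (show (-1:ℝ) ≤ s by linarith)
      rwa [hneg₂ (-1) (by norm_num)] at this
  set C : ℝ := f₁ M + f₂ M with hCdef
  have hC0 : 0 ≤ C := add_nonneg (hf₁0 M) (hf₂0 M)
  have hCbd : ∀ s : ℝ, s ≤ M → |F s| ≤ C := by
    intro s hsM
    rw [hF]
    calc |f₁ s - f₂ s| ≤ |f₁ s| + |f₂ s| := abs_sub _ _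
      _ = f₁ s + f₂ s := by rw [abs_of_nonneg (hf₁0 s), abs_of_nonneg (hf₂0 s)]
      _ ≤ C := add_le_add (f₁.mono hsM) (f₂.mono hsM)
  -- the dominating function
  set bound : ℝ → ℝ := fun x => (C + 2 / Γ * x ^ Δ) * Real.exp (-x) with hbdef
  have hbound_int : IntegrableOn bound (Ioi 0) := by
    have i1 : IntegrableOn (fun x => C * Real.exp (-x)) (Ioi 0) := by
      have := (exp_neg_integrableOn_Ioi 0 one_pos).const_mul C
      simp only [neg_one_mul] at this
      exact this
    have i2 : IntegrableOn (fun x => 2 / Γ * (Real.exp (-x) * x ^ (Δ + 1 - 1))) (Ioi 0) :=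
      (Real.GammaIntegral_convergent (by linarith : (0:ℝ) < Δ + 1)).const_mul _
    refine (i1.add i2).congr (Eventually.of_forall fun x => ?_)
    simp only [Pi.add_apply, add_sub_cancel_right]
    ring
  -- pointwise identity for t > 0
  have hid : ∀ t : ℝ, 0 < t →
      t ^ Δ * ((∫ v, Real.exp (-t * v) ∂f₁.measure) - ∫ v, Real.exp (-t * v) ∂f₂.measure)
        = ∫ x in Ioi 0, t ^ Δ * F (x / t) * Real.exp (-x) := by
    intro t ht
    obtain ⟨e₁, i₁⟩ := laplace_stieltjes_eq f₁ hneg₁ ht (hint₁ t ht)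
    obtain ⟨e₂, i₂⟩ := laplace_stieltjes_eq f₂ hneg₂ ht (hint₂ t ht)
    rw [e₁, e₂, ← integral_sub i₁ i₂]
    have hsub : (fun s => t * (Real.exp (-t * s) * f₁ s) - t * (Real.exp (-t * s) * f₂ s))
        = fun s => t * (Real.exp (-t * s) * F s) := by
      funext s; rw [hF]; ring
    rw [hsub]
    have hcv := MeasureTheory.Measure.integral_comp_div (fun s => t * (Real.exp (-t * s) * F s)) t
    have hsimp : (fun x : ℝ => t * (Real.exp (-t * (x / t)) * F (x / t)))
        = fun x : ℝ => t * (Real.exp (-x) * F (x / t)) := by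
      funext x
      have : -t * (x / t) = -x := by field_simp
      rw [this]
    rw [hsimp, abs_of_pos ht] at hcv
    have h4 : (∫ s : ℝ, t * (Real.exp (-t * s) * F s))
        = t⁻¹ * ∫ x : ℝ, t * (Real.exp (-x) * F (x / t)) := by
      rw [hcv, smul_eq_mul, ← mul_assoc, inv_mul_cancel₀ (ne_of_gt ht), one_mul]
    have h5 : (∫ x : ℝ, Real.exp (-x) * F (x / t))
        = ∫ x in Ioi 0, Real.exp (-x) * F (x / t) := by
      rw [← MeasureTheory.integral_Ici_eq_integral_Ioi]
      refine (MeasureTheory.setIntegral_eq_integral_of_forall_compl_eq_zero fun x hx => ?_).symm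
      have hx0 : x < 0 := by simpa using hx
      rw [hFneg (x / t) (div_neg_of_neg_of_pos hx0 ht), mul_zero]
    have h6 : t ^ Δ * (t⁻¹ * ∫ x : ℝ, t * (Real.exp (-x) * F (x / t)))
        = t ^ Δ * ∫ x : ℝ, Real.exp (-x) * F (x / t) := by
      rw [integral_const_mul]
      field_simp
    rw [h4, h6, h5, ← integral_const_mul]
    congr 1
    funext x
    ring
  -- the limit integrand
  have hlimint : (∫ x in Ioi 0, x ^ Δ / Γ * Real.exp (-x)) = 1 := by
    have h6 : (∫ x in Ioi 0, x ^ Δ / Γ * Real.exp (-x))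
        = Γ⁻¹ * ∫ x in Ioi 0, Real.exp (-x) * x ^ (Δ + 1 - 1) := by
      rw [← integral_const_mul]
      congr 1; funext x
      simp only [add_sub_cancel_right]; ring
    rw [h6, ← Real.Gamma_eq_integral (by linarith : (0:ℝ) < Δ + 1), ← hΓdef,
      inv_mul_cancel₀ (ne_of_gt hΓpos)]
  -- dominated convergence
  have hmain : Tendsto (fun t : ℝ => ∫ x in Ioi 0, t ^ Δ * F (x / t) * Real.exp (-x))
      (𝓝[>] (0:ℝ)) (𝓝 (∫ x in Ioi 0, x ^ Δ / Γ * Real.exp (-x))) := by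
    refine MeasureTheory.tendsto_integral_filter_of_dominated_convergence bound ?_ ?_ hbound_int ?_
    · filter_upwards [self_mem_nhdsWithin] with t ht
      exact (((measurable_const.mul (hFmeas.comp (measurable_id.div_const t))).mul
        (Real.measurable_exp.comp measurable_neg)).aestronglyMeasurable).restrict
    · filter_upwards [Ioo_mem_nhdsGT_of_mem (Set.left_mem_Ico.2 one_pos)] with t ht
      refine (ae_restrict_iff' measurableSet_Ioi).2 (Eventually.of_forall fun x hx => ?_)
      have hx0 : 0 < x := hx
      have ht0 : 0 < t := ht.1
      have ht1 : t < 1 := ht.2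
      have htΔ : 0 < t ^ Δ := Real.rpow_pos_of_pos ht0 _
      have hxt : 0 < x / t := div_pos hx0 ht0
      have hkey : t ^ Δ * |F (x / t)| ≤ C + 2 / Γ * x ^ Δ := by
        rcases le_or_gt M (x / t) with hMle | hMlt
        · have h7 := hMbd (x / t) hMle
          have h8 : t ^ Δ * |F (x / t)| ≤ t ^ Δ * (2 / Γ * (x / t) ^ Δ) :=
            mul_le_mul_of_nonneg_left h7 htΔ.le
          have h9 : t ^ Δ * (2 / Γ * (x / t) ^ Δ) = 2 / Γ * x ^ Δ := by
            rw [Real.div_rpow hx0.le ht0.le]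
            field_simp
          rw [h9] at h8
          have : 0 ≤ 2 / Γ * x ^ Δ := by positivity
          linarith
        · have h7 := hCbd (x / t) hMlt.le
          have h8 : t ^ Δ ≤ 1 := Real.rpow_le_one ht0.le ht1.le hΔ.le
          have h9 : t ^ Δ * |F (x / t)| ≤ C := by
            calc t ^ Δ * |F (x / t)| ≤ 1 * C := by
                  apply mul_le_mul h8 h7 (abs_nonneg _) zero_le_one
              _ = C := one_mul C
          have : 0 ≤ 2 / Γ * x ^ Δ := by positivity
          linarith
      have hexp : 0 < Real.exp (-x) := Real.exp_pos _
      rw [hbdef]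
      calc ‖t ^ Δ * F (x / t) * Real.exp (-x)‖
          = t ^ Δ * |F (x / t)| * Real.exp (-x) := by
            rw [Real.norm_eq_abs, abs_mul, abs_mul, abs_of_pos htΔ, abs_of_pos hexp]
        _ ≤ (C + 2 / Γ * x ^ Δ) * Real.exp (-x) :=
            mul_le_mul_of_nonneg_right hkey hexp.le
    · refine (ae_restrict_iff' measurableSet_Ioi).2 (Eventually.of_forall fun x hx => ?_)
      have hx0 : 0 < x := hx
      have hxΔ : 0 < x ^ Δ := Real.rpow_pos_of_pos hx0 _
      have hdiv : Tendsto (fun t : ℝ => x / t) (𝓝[>] (0:ℝ)) atTop := by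
        have := Tendsto.const_mul_atTop hx0 tendsto_inv_nhdsGT_zero
        simpa [div_eq_mul_inv] using this
      have h1 := hlim.comp hdiv
      have h2 := (h1.const_mul (x ^ Δ / Γ)).mul_const (Real.exp (-x))
      rw [mul_one] at h2
      refine h2.congr' ?_
      filter_upwards [self_mem_nhdsWithin] with t ht
      have ht0 : 0 < t := ht
      have hxt : 0 < x / t := div_pos hx0 ht0
      have hrw : (x / t) ^ (-Δ) = t ^ Δ / x ^ Δ := by
        rw [Real.rpow_neg hxt.le, Real.div_rpow hx0.le ht0.le, inv_div]
      have htΔ : 0 < t ^ Δ := Real.rpow_pos_of_pos ht0 _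
      simp only [Function.comp]
      rw [hrw]
      field_simp
  rw [← hlimint]
  refine hmain.congr' ?_
  filter_upwards [self_mem_nhdsWithin] with t ht
  exact (hid t ht).symm
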